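/- Let A ∈ ℝ^{2×3} have singular values σ₁ ≥ σ₂ ≥ 0, and let λ > 0. If σ₁ + σ₂ > λ and σ₁ − σ₂ ≤ λ, then the unique minimizer X* over X ∈ ℝ^{2×3} of the function (1/2)‖A − X‖_F² + λ‖X‖₂ satisfies X*(X*)ᵀ = c² I₂ with c = (σ₁ + σ₂ − λ)/2; in particular both singular values of X* equal c, so X* is a (scaled) orthogonal matrix. -/

import Mathlib

open Matrix
open scoped RealInnerProductSpace

set_option maxHeartbeats 2000000

/-- The spectral norm (largest singular value) of a real matrix, defined as the
operator norm of the induced linear map between Euclidean spaces. -/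
noncomputable def matrixSpectralNorm {m n : ℕ} (A : Matrix (Fin m) (Fin n) ℝ) : ℝ :=
  ‖LinearMap.toContinuousLinearMap (Matrix.toEuclideanLin A)‖

/-- The Frobenius norm of a real matrix. -/
noncomputable def frobNorm {m n : ℕ} (A : Matrix (Fin m) (Fin n) ℝ) : ℝ :=
  Real.sqrt (∑ i, ∑ j, (A i j) ^ 2)

lemma frob_sq {m n : ℕ} (Y : Matrix (Fin m) (Fin n) ℝ) :
    frobNorm Y ^ 2 = ∑ i, ∑ j, (Y i j) ^ 2 :=
  Real.sq_sqrt (Finset.sum_nonneg fun _ _ => Finset.sum_nonneg fun _ _ => sq_nonneg _)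



lemma dot_eq_inner {m n : ℕ} (X : Matrix (Fin m) (Fin n) ℝ) (u : Fin m → ℝ) (v : Fin n → ℝ) :
    ∑ k, ∑ j, u k * X k j * v j
      = ⟪(WithLp.equiv 2 _).symm u, (Matrix.toEuclideanLin X) ((WithLp.equiv 2 _).symm v)⟫ := by
  rw [Matrix.toEuclideanLin_apply, PiLp.inner_apply]
  simp only [RCLike.inner_apply, conj_trivial, WithLp.equiv_symm_apply, WithLp.ofLp_toLp]
  congr 1; ext k
  rw [Matrix.mulVec, dotProduct, Finset.sum_mul]
  congr 1; ext j; ring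

lemma euclid_norm_eq {n : ℕ} (v : Fin n → ℝ) :
    ‖(WithLp.equiv 2 (Fin n → ℝ)).symm v‖ = Real.sqrt (∑ j, v j ^ 2) := by
  rw [EuclideanSpace.norm_eq]
  simp only [WithLp.equiv_symm_apply, WithLp.ofLp_toLp, Real.norm_eq_abs, sq_abs]

lemma dot_le_spec {m n : ℕ} (X : Matrix (Fin m) (Fin n) ℝ) (u : Fin m → ℝ) (v : Fin n → ℝ)
    (hu : ∑ k, u k ^ 2 = 1) (hv : ∑ j, v j ^ 2 = 1) :
    ∑ k, ∑ j, u k * X k j * v j ≤ matrixSpectralNorm X := by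
  rw [dot_eq_inner]
  have hnu : ‖(WithLp.equiv 2 (Fin m → ℝ)).symm u‖ = 1 := by
    rw [euclid_norm_eq, hu, Real.sqrt_one]
  have hnv : ‖(WithLp.equiv 2 (Fin n → ℝ)).symm v‖ = 1 := by
    rw [euclid_norm_eq, hv, Real.sqrt_one]
  have hle : ‖(Matrix.toEuclideanLin X) ((WithLp.equiv 2 (Fin n → ℝ)).symm v)‖
      ≤ matrixSpectralNorm X * ‖(WithLp.equiv 2 (Fin n → ℝ)).symm v‖ := by
    have := (LinearMap.toContinuousLinearMap (Matrix.toEuclideanLin X)).le_opNorm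
      ((WithLp.equiv 2 (Fin n → ℝ)).symm v)
    simpa [matrixSpectralNorm] using this
  calc ⟪(WithLp.equiv 2 _).symm u, (Matrix.toEuclideanLin X) ((WithLp.equiv 2 _).symm v)⟫
      ≤ ‖(WithLp.equiv 2 (Fin m → ℝ)).symm u‖ *
        ‖(Matrix.toEuclideanLin X) ((WithLp.equiv 2 (Fin n → ℝ)).symm v)‖ := real_inner_le_norm _ _
    _ ≤ 1 * (matrixSpectralNorm X * 1) := by
        rw [hnu, hnv] at *
        simpa using hle
    _ = matrixSpectralNorm X := by ring


lemma spec_eq {Y : Matrix (Fin 2) (Fin 3) ℝ} {u : Fin 2 → Fin 2 → ℝ} {v : Fin 2 → Fin 3 → ℝ}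
    {c : ℝ} (hc : 0 < c)
    (huu00 : ∑ k, u 0 k * u 0 k = 1) (huu11 : ∑ k, u 1 k * u 1 k = 1)
    (huu01 : ∑ k, u 0 k * u 1 k = 0)
    (hvv00 : ∑ j, v 0 j * v 0 j = 1) (hvv11 : ∑ j, v 1 j * v 1 j = 1)
    (hvv01 : ∑ j, v 0 j * v 1 j = 0)
    (hY : ∀ k j, Y k j = c * (u 0 k * v 0 j + u 1 k * v 1 j)) :
    matrixSpectralNorm Y = c := by
  simp only [Fin.sum_univ_two] at huu00 huu11 huu01
  simp only [Fin.sum_univ_three] at hvv00 hvv11 hvv01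
  have key : ∀ x : Fin 3 → ℝ,
      (Y *ᵥ x) 0 ^ 2 + (Y *ᵥ x) 1 ^ 2 ≤ c ^ 2 * (x 0 ^ 2 + x 1 ^ 2 + x 2 ^ 2) := by
    intro x
    set d0 : ℝ := v 0 0 * x 0 + v 0 1 * x 1 + v 0 2 * x 2 with hd0
    set d1 : ℝ := v 1 0 * x 0 + v 1 1 * x 1 + v 1 2 * x 2 with hd1
    have hmv : ∀ k, (Y *ᵥ x) k = c * (d0 * u 0 k + d1 * u 1 k) := by
      intro k
      simp only [Matrix.mulVec, dotProduct, hY, Fin.sum_univ_three]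
      rw [hd0, hd1]; ring
    have hexp : (x 0 - d0 * v 0 0 - d1 * v 1 0) ^ 2 + (x 1 - d0 * v 0 1 - d1 * v 1 1) ^ 2
          + (x 2 - d0 * v 0 2 - d1 * v 1 2) ^ 2
        = (x 0 ^ 2 + x 1 ^ 2 + x 2 ^ 2) - d0 ^ 2 - d1 ^ 2 := by
      rw [hd0, hd1]
      linear_combination (v 0 0 * x 0 + v 0 1 * x 1 + v 0 2 * x 2) ^ 2 * hvv00
        + (v 1 0 * x 0 + v 1 1 * x 1 + v 1 2 * x 2) ^ 2 * hvv11
        + 2 * (v 0 0 * x 0 + v 0 1 * x 1 + v 0 2 * x 2)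
            * (v 1 0 * x 0 + v 1 1 * x 1 + v 1 2 * x 2) * hvv01
    have h0 : (0:ℝ) ≤ (x 0 - d0 * v 0 0 - d1 * v 1 0) ^ 2 + (x 1 - d0 * v 0 1 - d1 * v 1 1) ^ 2
          + (x 2 - d0 * v 0 2 - d1 * v 1 2) ^ 2 := by positivity
    have hbessel : d0 ^ 2 + d1 ^ 2 ≤ x 0 ^ 2 + x 1 ^ 2 + x 2 ^ 2 := by linarith [hexp ▸ h0]
    have hstep : (Y *ᵥ x) 0 ^ 2 + (Y *ᵥ x) 1 ^ 2 = c ^ 2 * (d0 ^ 2 + d1 ^ 2) := by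
      rw [hmv 0, hmv 1]
      linear_combination (c ^ 2 * d0 ^ 2) * huu00 + (c ^ 2 * d1 ^ 2) * huu11
        + (2 * c ^ 2 * d0 * d1) * huu01
    rw [hstep]
    nlinarith [hbessel, sq_nonneg c]
  have hub : matrixSpectralNorm Y ≤ c := by
    apply ContinuousLinearMap.opNorm_le_bound _ hc.le
    intro x
    have happ : ‖LinearMap.toContinuousLinearMap (Matrix.toEuclideanLin Y) x‖
        = Real.sqrt (∑ k, (Y *ᵥ ((WithLp.equiv 2 (Fin 3 → ℝ)) x)) k ^ 2) := by
      simp only [LinearMap.coe_toContinuousLinearMap', Matrix.toEuclideanLin_apply]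
      exact euclid_norm_eq _
    have hxn : ‖x‖ = Real.sqrt (∑ j, ((WithLp.equiv 2 (Fin 3 → ℝ)) x) j ^ 2) := by
      rw [EuclideanSpace.norm_eq]
      simp only [Real.norm_eq_abs, sq_abs]
      rfl
    rw [happ, hxn, ← Real.sqrt_sq hc.le, ← Real.sqrt_mul (sq_nonneg c)]
    apply Real.sqrt_le_sqrt
    simp only [Fin.sum_univ_two, Fin.sum_univ_three]
    exact key _
  have hlb : c ≤ matrixSpectralNorm Y := by
    have hmv : Y *ᵥ v 0 = fun k => c * u 0 k := by
      funext k
      simp only [Matrix.mulVec, dotProduct, hY, Fin.sum_univ_three]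
      linear_combination (c * u 0 k) * hvv00 + (c * u 1 k) * hvv01
    have h1 := (LinearMap.toContinuousLinearMap (Matrix.toEuclideanLin Y)).le_opNorm
      ((WithLp.equiv 2 (Fin 3 → ℝ)).symm (v 0))
    have hn1 : ‖(WithLp.equiv 2 (Fin 3 → ℝ)).symm (v 0)‖ = 1 := by
      rw [euclid_norm_eq]
      have h : ∑ j, v 0 j ^ 2 = 1 := by
        simp only [Fin.sum_univ_three]; linear_combination hvv00
      rw [h, Real.sqrt_one]
    have hnY : ‖LinearMap.toContinuousLinearMap (Matrix.toEuclideanLin Y)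
        ((WithLp.equiv 2 (Fin 3 → ℝ)).symm (v 0))‖ = c := by
      simp only [LinearMap.coe_toContinuousLinearMap', Matrix.toEuclideanLin_apply]
      simp only [WithLp.equiv_symm_apply, WithLp.ofLp_toLp]
      rw [hmv, ← WithLp.equiv_symm_apply, euclid_norm_eq]
      have h : ∑ k, (c * u 0 k) ^ 2 = c ^ 2 := by
        simp only [Fin.sum_univ_two]; linear_combination c ^ 2 * huu00
      rw [h, Real.sqrt_sq hc.le]
    rw [hnY, hn1, mul_one] at h1
    exact h1
  linarith [hub, hlb]


lemma eig_setup (A : Matrix (Fin 2) (Fin 3) ℝ) :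
    ∃ (u : Fin 2 → Fin 2 → ℝ) (e : Fin 2 → ℝ),
      (∀ i, (A * Aᵀ) *ᵥ u i = e i • u i) ∧
      (∀ i i', ∑ k, u i k * u i' k = if i = i' then 1 else 0) ∧
      (∀ k l, ∑ i, u i k * u i l = if k = l then 1 else 0) ∧
      (e 0 + e 1 = Matrix.trace (A * Aᵀ)) ∧
      (e 0 * e 1 = (A * Aᵀ).det) := by
  have hM : (A * Aᵀ).IsHermitian := by
    have := Matrix.isHermitian_mul_conjTranspose_self A
    simpa using this
  set B := hM.eigenvectorBasis with hB
  refine ⟨fun i k => B i k, hM.eigenvalues, ?_, ?_, ?_, ?_, ?_⟩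
  · intro i
    exact hM.mulVec_eigenvectorBasis i
  · intro i i'
    have h := (orthonormal_iff_ite.mp B.orthonormal) i i'
    rw [PiLp.inner_apply] at h
    simp only [RCLike.inner_apply, conj_trivial] at h
    rw [← h]
    exact Finset.sum_congr rfl fun _ _ => mul_comm _ _
  · intro k l
    have hrep := B.sum_repr' (EuclideanSpace.single l (1:ℝ))
    have h2 := congrFun (congrArg (fun (x : EuclideanSpace ℝ (Fin 2)) (k : Fin 2) => x k) hrep) k
    simp only [EuclideanSpace.inner_single_right, conj_trivial, mul_one] at h2
    simp only [Fin.sum_univ_two, one_mul, EuclideanSpace.single_apply,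
      PiLp.add_apply, PiLp.smul_apply, smul_eq_mul] at h2
    simp only [Fin.sum_univ_two]
    rw [← h2]; ring
  · have hst := hM.spectral_theorem
    have htr := congrArg Matrix.trace hst
    rw [Unitary.conjStarAlgAut_apply] at htr
    rw [Matrix.trace_mul_cycle] at htr
    rw [show (star (hM.eigenvectorUnitary : Matrix (Fin 2) (Fin 2) ℝ)) *
        (hM.eigenvectorUnitary : Matrix (Fin 2) (Fin 2) ℝ) = 1 from
      Matrix.UnitaryGroup.star_mul_self _, one_mul] at htr
    rw [htr, Matrix.trace_diagonal]
    simp [Fin.sum_univ_two]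
  · have := hM.det_eq_prod_eigenvalues
    rw [this, Fin.prod_univ_two]
    simp

/-- Let `A ∈ ℝ^{2×3}` have singular values `σ₁ ≥ σ₂ ≥ 0` (characterized by
`σ₁² + σ₂² = tr(AAᵀ)` and `σ₁²σ₂² = det(AAᵀ)`), and let `λ > 0`. If `σ₁ + σ₂ > λ` and
`σ₁ - σ₂ ≤ λ`, then the unique minimizer `X*` of `X ↦ (1/2)‖A - X‖_F² + λ‖X‖₂` satisfies
`X* (X*)ᵀ = c² I₂` with `c = (σ₁ + σ₂ - λ)/2`, i.e. `X*` is a scaled orthogonal matrix. -/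
theorem prox_spectralNorm_orthogonal (A : Matrix (Fin 2) (Fin 3) ℝ) (σ₁ σ₂ lam : ℝ)
    (hord : σ₂ ≤ σ₁) (hpos : 0 ≤ σ₂)
    (htr : σ₁ ^ 2 + σ₂ ^ 2 = Matrix.trace (A * Aᵀ))
    (hdet : (σ₁ * σ₂) ^ 2 = (A * Aᵀ).det)
    (hlam : 0 < lam) (hsum : lam < σ₁ + σ₂) (hdiff : σ₁ - σ₂ ≤ lam) :
    ∃ Xstar : Matrix (Fin 2) (Fin 3) ℝ,
      (∀ X : Matrix (Fin 2) (Fin 3) ℝ, X ≠ Xstar →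
        (1 / 2) * frobNorm (A - Xstar) ^ 2 + lam * matrixSpectralNorm Xstar
          < (1 / 2) * frobNorm (A - X) ^ 2 + lam * matrixSpectralNorm X) ∧
      Xstar * Xstarᵀ = ((σ₁ + σ₂ - lam) / 2) ^ 2 • (1 : Matrix (Fin 2) (Fin 2) ℝ) := by
  obtain ⟨u, e, hMu, huu, hcomp, htr2, hdet2⟩ := eig_setup A
  -- basic positivity
  have hσ₂pos : 0 < σ₂ := by linarith
  have hσ₁pos : 0 < σ₁ := by linarith
  set c : ℝ := (σ₁ + σ₂ - lam) / 2 with hcdef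
  have hc : 0 < c := by rw [hcdef]; linarith
  -- concrete orthonormality facts for u
  have hU00 : u 0 0 * u 0 0 + u 0 1 * u 0 1 = 1 := by
    have := huu 0 0; simpa [Fin.sum_univ_two] using this
  have hU11 : u 1 0 * u 1 0 + u 1 1 * u 1 1 = 1 := by
    have := huu 1 1; simpa [Fin.sum_univ_two] using this
  have hU01 : u 0 0 * u 1 0 + u 0 1 * u 1 1 = 0 := by
    have := huu 0 1; simpa [Fin.sum_univ_two] using this
  -- eigenvalue facts
  have hesum : e 0 + e 1 = σ₁ ^ 2 + σ₂ ^ 2 := by rw [htr2, ← htr]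
  have heprod : e 0 * e 1 = (σ₁ * σ₂) ^ 2 := by rw [hdet2, ← hdet]
  have hkey : ∀ i i', ∑ j, (Aᵀ *ᵥ u i) j * (Aᵀ *ᵥ u i') j = e i' * ∑ k, u i k * u i' k := by
    intro i i'
    have h0 := congrFun (hMu i') 0
    have h1 := congrFun (hMu i') 1
    simp only [Matrix.mulVec, dotProduct, Matrix.mul_apply, Matrix.transpose_apply,
      Fin.sum_univ_two, Fin.sum_univ_three, Pi.smul_apply, smul_eq_mul] at h0 h1 ⊢
    linear_combination (u i 0) * h0 + (u i 1) * h1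
  have henn : ∀ i, 0 ≤ e i := by
    intro i
    have hk := hkey i i
    have := huu i i
    rw [if_pos rfl] at this
    rw [this, mul_one] at hk
    rw [← hk]
    exact Finset.sum_nonneg fun j _ => mul_self_nonneg _
  -- singular values
  set τ : Fin 2 → ℝ := fun i => Real.sqrt (e i) with hτdef
  have hτnn : ∀ i, 0 ≤ τ i := fun i => Real.sqrt_nonneg _
  have hτsq : ∀ i, τ i ^ 2 = e i := fun i => Real.sq_sqrt (henn i)
  have hτprod : τ 0 * τ 1 = σ₁ * σ₂ := by
    rw [hτdef]
    simp only
    rw [← Real.sqrt_mul (henn 0), heprod, Real.sqrt_sq (by positivity)]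
  have hτsum : τ 0 + τ 1 = σ₁ + σ₂ := by
    have h1 : (τ 0 + τ 1) ^ 2 = (σ₁ + σ₂) ^ 2 := by
      have e0 := hτsq 0; have e1 := hτsq 1
      nlinarith [hesum, hτprod]
    have h2 : 0 ≤ τ 0 + τ 1 := by linarith [hτnn 0, hτnn 1]
    nlinarith [h1, h2]
  have hτmem : ∀ i, (τ i - σ₁) * (τ i - σ₂) = 0 := by
    intro i
    fin_cases i
    · show (τ 0 - σ₁) * (τ 0 - σ₂) = 0
      linear_combination (τ 0) * hτsum - hτprod
    · show (τ 1 - σ₁) * (τ 1 - σ₂) = 0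
      linear_combination (τ 1) * hτsum - hτprod
  have hτlb : ∀ i, σ₂ ≤ τ i := by
    intro i
    rcases mul_eq_zero.mp (hτmem i) with h | h
    · have : τ i = σ₁ := by linarith
      linarith
    · have : τ i = σ₂ := by linarith
      linarith
  have hcleτ : ∀ i, c ≤ τ i := by
    intro i
    have : c ≤ σ₂ := by rw [hcdef]; linarith
    linarith [hτlb i]
  have hτpos : ∀ i, 0 < τ i := fun i => lt_of_lt_of_le hc (hcleτ i)
  -- right singular vectors
  set v : Fin 2 → Fin 3 → ℝ := fun i j => (Aᵀ *ᵥ u i) j / τ i with hvdef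
  have hτv : ∀ i j, τ i * v i j = (Aᵀ *ᵥ u i) j := by
    intro i j
    show τ i * ((Aᵀ *ᵥ u i) j / τ i) = (Aᵀ *ᵥ u i) j
    rw [mul_comm]
    exact div_mul_cancel₀ _ (hτpos i).ne'
  have hvv : ∀ i i', ∑ j, v i j * v i' j = if i = i' then 1 else 0 := by
    intro i i'
    have hmulsum : (τ i * τ i') * (∑ j, v i j * v i' j)
        = ∑ j, (Aᵀ *ᵥ u i) j * (Aᵀ *ᵥ u i') j := by
      rw [Finset.mul_sum]
      refine Finset.sum_congr rfl fun j _ => ?_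
      rw [← hτv i j, ← hτv i' j]
      ring
    rw [hkey i i', huu i i'] at hmulsum
    by_cases h : i = i'
    · subst h
      rw [if_pos rfl, mul_one] at hmulsum
      rw [if_pos rfl]
      have h2 : (τ i * τ i) * (∑ j, v i j * v i j) = (τ i * τ i) * 1 := by
        rw [hmulsum, ← hτsq i]; ring
      exact mul_left_cancel₀ (mul_pos (hτpos i) (hτpos i)).ne' h2
    · rw [if_neg h, mul_zero] at hmulsum
      rw [if_neg h]
      rcases mul_eq_zero.mp hmulsum with h' | h'
      · exact absurd h' (mul_pos (hτpos i) (hτpos i')).ne'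
      · exact h'
  have hV00 : v 0 0 * v 0 0 + v 0 1 * v 0 1 + v 0 2 * v 0 2 = 1 := by
    have := hvv 0 0; simpa [Fin.sum_univ_three] using this
  have hV11 : v 1 0 * v 1 0 + v 1 1 * v 1 1 + v 1 2 * v 1 2 = 1 := by
    have := hvv 1 1; simpa [Fin.sum_univ_three] using this
  have hV01 : v 0 0 * v 1 0 + v 0 1 * v 1 1 + v 0 2 * v 1 2 = 0 := by
    have := hvv 0 1; simpa [Fin.sum_univ_three] using this
  -- recovery of A
  have hA : ∀ k j, A k j = τ 0 * (u 0 k * v 0 j) + τ 1 * (u 1 k * v 1 j) := by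
    intro k j
    have e0 : τ 0 * (u 0 k * v 0 j) + τ 1 * (u 1 k * v 1 j)
        = u 0 k * (τ 0 * v 0 j) + u 1 k * (τ 1 * v 1 j) := by ring
    rw [e0, hτv 0 j, hτv 1 j]
    have hc0 := hcomp k 0
    have hc1 := hcomp k 1
    simp only [Matrix.mulVec, dotProduct, Matrix.transpose_apply, Fin.sum_univ_two] at hc0 hc1 ⊢
    have hAk : A k j = A 0 j * (if k = (0:Fin 2) then (1:ℝ) else 0)
        + A 1 j * (if k = (1:Fin 2) then (1:ℝ) else 0) := by
      fin_cases k <;> simp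
    rw [hAk]
    linear_combination (-(A 0 j)) * hc0 + (-(A 1 j)) * hc1
  -- the minimizer
  set Xstar : Matrix (Fin 2) (Fin 3) ℝ :=
    Matrix.of (fun k j => c * (u 0 k * v 0 j + u 1 k * v 1 j)) with hXdef
  have hXs : ∀ k j, Xstar k j = c * (u 0 k * v 0 j + u 1 k * v 1 j) := fun k j => rfl
  refine ⟨Xstar, ?_, ?_⟩
  · intro X hX
    have hspec : matrixSpectralNorm Xstar = c :=
      spec_eq hc (by simpa using huu 0 0) (by simpa using huu 1 1) (by simpa using huu 0 1)
        (by simpa using hvv 0 0) (by simpa using hvv 1 1) (by simpa using hvv 0 1) hXs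
    set γ : Fin 2 → ℝ := fun i => τ i - c with hγdef
    have hγnn : ∀ i, 0 ≤ γ i := fun i => by
      show 0 ≤ τ i - c
      linarith [hcleτ i]
    have hγsum : γ 0 + γ 1 = lam := by
      show (τ 0 - c) + (τ 1 - c) = lam
      rw [hcdef]; linarith [hτsum]
    have hG : ∀ k j, A k j - Xstar k j = γ 0 * (u 0 k * v 0 j) + γ 1 * (u 1 k * v 1 j) := by
      intro k j
      rw [hA k j, hXs k j]
      show _ = (τ 0 - c) * (u 0 k * v 0 j) + (τ 1 - c) * (u 1 k * v 1 j)
      ring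
    have hdot0 : ∑ k, ∑ j, u 0 k * X k j * v 0 j ≤ matrixSpectralNorm X :=
      dot_le_spec X (u 0) (v 0)
        (by simp only [Fin.sum_univ_two]; linear_combination hU00)
        (by simp only [Fin.sum_univ_three]; linear_combination hV00)
    have hdot1 : ∑ k, ∑ j, u 1 k * X k j * v 1 j ≤ matrixSpectralNorm X :=
      dot_le_spec X (u 1) (v 1)
        (by simp only [Fin.sum_univ_two]; linear_combination hU11)
        (by simp only [Fin.sum_univ_three]; linear_combination hV11)
    have hGX : ∑ k, ∑ j, (A k j - Xstar k j) * X k j ≤ lam * matrixSpectralNorm X := by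
      have hexp : ∑ k, ∑ j, (A k j - Xstar k j) * X k j
          = γ 0 * (∑ k, ∑ j, u 0 k * X k j * v 0 j)
            + γ 1 * (∑ k, ∑ j, u 1 k * X k j * v 1 j) := by
        simp only [Fin.sum_univ_two, Fin.sum_univ_three, hG]
        ring
      rw [hexp, ← hγsum]
      have h0 := mul_le_mul_of_nonneg_left hdot0 (hγnn 0)
      have h1 := mul_le_mul_of_nonneg_left hdot1 (hγnn 1)
      nlinarith [h0, h1]
    have hGXs : ∑ k, ∑ j, (A k j - Xstar k j) * Xstar k j = c * lam := by
      have hexp2 : ∑ k, ∑ j, (A k j - Xstar k j) * Xstar k j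
          = ∑ k, ∑ j, (γ 0 * (u 0 k * v 0 j) + γ 1 * (u 1 k * v 1 j))
              * (c * (u 0 k * v 0 j + u 1 k * v 1 j)) :=
        Finset.sum_congr rfl fun k _ => Finset.sum_congr rfl fun j _ => by rw [hG, hXs]
      rw [hexp2]
      simp only [Fin.sum_univ_two, Fin.sum_univ_three]
      rw [← hγsum]
      linear_combination (c * γ 0 * (v 0 0 * v 0 0 + v 0 1 * v 0 1 + v 0 2 * v 0 2)) * hU00
        + (c * γ 0) * hV00
        + (c * γ 1 * (v 1 0 * v 1 0 + v 1 1 * v 1 1 + v 1 2 * v 1 2)) * hU11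
        + (c * γ 1) * hV11
        + (c * (γ 0 + γ 1) * (v 0 0 * v 1 0 + v 0 1 * v 1 1 + v 0 2 * v 1 2)) * hU01
    have hDpos : 0 < ∑ k, ∑ j, (X k j - Xstar k j) ^ 2 := by
      have hne : ∃ k j, X k j ≠ Xstar k j := by
        by_contra h
        push_neg at h
        exact hX (by ext k j; exact h k j)
      obtain ⟨k, j, hkj⟩ := hne
      have h1 : 0 < (X k j - Xstar k j) ^ 2 := by
        have := sub_ne_zero.mpr hkj
        positivity
      calc (0:ℝ) < (X k j - Xstar k j) ^ 2 := h1
        _ ≤ ∑ j', (X k j' - Xstar k j') ^ 2 :=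
            Finset.single_le_sum (f := fun j' => (X k j' - Xstar k j') ^ 2)
              (fun _ _ => sq_nonneg _) (Finset.mem_univ j)
        _ ≤ ∑ k', ∑ j', (X k' j' - Xstar k' j') ^ 2 :=
            Finset.single_le_sum (f := fun k' => ∑ j', (X k' j' - Xstar k' j') ^ 2)
              (fun _ _ => Finset.sum_nonneg fun _ _ => sq_nonneg _) (Finset.mem_univ k)
    rw [hspec]
    have hfX : frobNorm (A - X) ^ 2 = ∑ k, ∑ j, (A k j - X k j) ^ 2 := by
      rw [frob_sq]
      exact Finset.sum_congr rfl fun k _ => Finset.sum_congr rfl fun j _ => by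
        rw [Matrix.sub_apply]
    have hfXs : frobNorm (A - Xstar) ^ 2 = ∑ k, ∑ j, (A k j - Xstar k j) ^ 2 := by
      rw [frob_sq]
      exact Finset.sum_congr rfl fun k _ => Finset.sum_congr rfl fun j _ => by
        rw [Matrix.sub_apply]
    rw [hfX, hfXs]
    have hiden : ∑ k, ∑ j, (A k j - X k j) ^ 2
        = ∑ k, ∑ j, (A k j - Xstar k j) ^ 2
          - 2 * ((∑ k, ∑ j, (A k j - Xstar k j) * X k j)
            - (∑ k, ∑ j, (A k j - Xstar k j) * Xstar k j))
          + ∑ k, ∑ j, (X k j - Xstar k j) ^ 2 := by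
      simp only [Fin.sum_univ_two, Fin.sum_univ_three]
      ring
    rw [hiden, hGXs]
    linarith [hGX, hDpos]
  · -- Xstar * Xstarᵀ = c² • 1
    ext k l
    simp only [Matrix.mul_apply, Matrix.transpose_apply, Matrix.smul_apply, Matrix.one_apply,
      Fin.sum_univ_three, hXs, smul_eq_mul]
    have hcl := hcomp k l
    simp only [Fin.sum_univ_two] at hcl
    rw [hcdef] at *
    linear_combination (((σ₁ + σ₂ - lam) / 2) ^ 2 * (u 0 k * u 0 l)) * hV00
      + (((σ₁ + σ₂ - lam) / 2) ^ 2 * (u 1 k * u 1 l)) * hV11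
      + (((σ₁ + σ₂ - lam) / 2) ^ 2 * (u 0 k * u 1 l + u 1 k * u 0 l)) * hV01
      + ((σ₁ + σ₂ - lam) / 2) ^ 2 * hcl
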